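/- Let a, c, b2 ∈ ℂ be nonzero and b1 ∈ ℂ with b1 ≠ b2 and b1 ≠ −2b2. Then the polynomial P(X) = a^6(b2 X − b1)^6 − c^6(X^3 − 3X + 2) has at least two distinct complex roots; equivalently, P(X) is not of the form a^6 b2^6 (X − r)^6 for any r ∈ ℂ. -/
import Mathlib
open Polynomial

lemma expandP (a c b2 b1 : ℂ) : C (a ^ 6) * (C b2 * X - C b1) ^ 6 - C (c ^ 6) * (X ^ 3 - 3 * X + 2)
    = C (a^6*b2^6)*X^6 + C (-(6*a^6*b2^5*b1))*X^5 + C (15*a^6*b2^4*b1^2)*X^4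
      + C (-(20*a^6*b2^3*b1^3) - c^6)*X^3 + C (15*a^6*b2^2*b1^4)*X^2
      + C (-(6*a^6*b2*b1^5) + 3*c^6)*X + C (a^6*b1^6 - 2*c^6) := by
  simp only [map_mul, map_pow, map_add, map_sub, map_neg, map_ofNat]; ring

lemma expandQ (a b2 r : ℂ) : (C (a^6*b2^6) * (X - C r)^6 : ℂ[X])
    = C (a^6*b2^6)*X^6 + C (-(6*a^6*b2^6*r))*X^5 + C (15*a^6*b2^6*r^2)*X^4
      + C (-(20*a^6*b2^6*r^3))*X^3 + C (15*a^6*b2^6*r^4)*X^2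
      + C (-(6*a^6*b2^6*r^5))*X + C (a^6*b2^6*r^6) := by
  simp only [map_mul, map_pow, map_add, map_sub, map_neg, map_ofNat]; ring

lemma no6 (a c b2 b1 : ℂ) (ha : a ≠ 0) (hc : c ≠ 0) (hb2 : b2 ≠ 0)
    (hb : b1 ≠ b2) (hb' : b1 ≠ -2 * b2) (r : ℂ)
    (h : (C (a ^ 6) * (C b2 * X - C b1) ^ 6 - C (c ^ 6) * (X ^ 3 - 3 * X + 2) : ℂ[X])
       = C (a ^ 6 * b2 ^ 6) * (X - C r) ^ 6) : False := by
  have h' := h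
  rw [expandP, expandQ] at h'
  have h5 := congrArg (fun p => coeff p 5) h'
  simp only [coeff_add, coeff_C_mul, coeff_X_pow, coeff_C, coeff_X] at h5
  norm_num at h5
  have ha6 : (a:ℂ)^6 ≠ 0 := pow_ne_zero _ ha
  have hbr : b1 = b2 * r := by
    have hne : (6:ℂ) * a^6 * b2^5 ≠ 0 := by
      exact mul_ne_zero (mul_ne_zero (by norm_num) ha6) (pow_ne_zero _ hb2)
    have h6 : 6 * a^6 * b2^5 * b1 = 6 * a^6 * b2^5 * (b2 * r) := by linear_combination h5
    exact mul_left_cancel₀ hne h6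
  have he := congrArg (fun p => eval r p) h
  simp only [eval_sub, eval_mul, eval_add, eval_pow, eval_C, eval_X, eval_ofNat] at he
  rw [hbr] at he
  have hc6 : (c:ℂ)^6 ≠ 0 := pow_ne_zero _ hc
  have he2 : c^6 * (r^3 - 3*r + 2) = 0 := by linear_combination -he
  have hr : r^3 - 3*r + 2 = 0 := (mul_eq_zero.1 he2).resolve_left hc6
  have : (r - 1)^2 * (r + 2) = 0 := by linear_combination hr
  rcases mul_eq_zero.1 this with h1 | h2
  · have : r = 1 := sub_eq_zero.1 (pow_eq_zero_iff (n := 2) (by norm_num) |>.1 h1)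
    exact hb (by rw [hbr, this, mul_one])
  · have : r = -2 := by linear_combination h2
    exact hb' (by rw [hbr, this]; ring)

theorem stmt_16 (a c b2 b1 : ℂ) (ha : a ≠ 0) (hc : c ≠ 0) (hb2 : b2 ≠ 0)
    (hb : b1 ≠ b2) (hb' : b1 ≠ -2 * b2) :
    (∃ r1 r2 : ℂ, r1 ≠ r2 ∧
      (C (a ^ 6) * (C b2 * X - C b1) ^ 6 - C (c ^ 6) * (X ^ 3 - 3 * X + 2)
        : ℂ[X]).eval r1 = 0 ∧
      (C (a ^ 6) * (C b2 * X - C b1) ^ 6 - C (c ^ 6) * (X ^ 3 - 3 * X + 2)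
        : ℂ[X]).eval r2 = 0) ∧
    ¬∃ r : ℂ, (C (a ^ 6) * (C b2 * X - C b1) ^ 6 - C (c ^ 6) * (X ^ 3 - 3 * X + 2)
        : ℂ[X]) = C (a ^ 6 * b2 ^ 6) * (X - C r) ^ 6 := by
  set P : ℂ[X] := C (a ^ 6) * (C b2 * X - C b1) ^ 6 - C (c ^ 6) * (X ^ 3 - 3 * X + 2) with hPdef
  have hab : a^6 * b2^6 ≠ 0 := mul_ne_zero (pow_ne_zero _ ha) (pow_ne_zero _ hb2)
  have hdeg : P.natDegree = 6 := by
    rw [hPdef, expandP]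
    compute_degree!
  have hP0 : P ≠ 0 := fun h0 => by simp [h0] at hdeg
  have hlc : P.leadingCoeff = a^6 * b2^6 := by
    rw [leadingCoeff, hdeg, hPdef, expandP]
    simp only [coeff_add, coeff_C_mul, coeff_X_pow, coeff_C, coeff_X]
    norm_num
  have hcard : P.roots.card = 6 := by
    rw [← hdeg]
    exact splits_iff_card_roots.1 (IsAlgClosed.splits (k := ℂ) P)
  constructor
  · by_contra hcon
    push_neg at hcon
    have hrne : P.roots ≠ 0 := by
      intro h0; rw [h0] at hcard; simp at hcard
    obtain ⟨r1, hr1⟩ := Multiset.exists_mem_of_ne_zero hrne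
    have hall : ∀ s ∈ P.roots, s = r1 := by
      intro s hs
      by_contra hsne
      have h1 : P.eval s = 0 := (mem_roots hP0).1 hs
      have h2 : P.eval r1 = 0 := (mem_roots hP0).1 hr1
      exact (hcon s r1 hsne h1 h2).elim
    have hrep : P.roots = Multiset.replicate 6 r1 := by
      rw [← hcard]; exact Multiset.eq_replicate_card.2 hall
    have hfac := C_leadingCoeff_mul_prod_multiset_X_sub_C (p := P) (by rw [hcard, hdeg])
    rw [hrep, Multiset.map_replicate, Multiset.prod_replicate, hlc] at hfac
    exact no6 a c b2 b1 ha hc hb2 hb hb' r1 hfac.symm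
  · rintro ⟨r, hr⟩
    exact no6 a c b2 b1 ha hc hb2 hb hb' r hr
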